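/- Every compact Hausdorff Mazurkiewicz manifold with respect to an admissible class 𝒞 is a strong Cantor manifold with respect to 𝒞. -/

import Mathlib

/-- `T` is an `F_σ`-subset of `S` (in the subspace `S`): a countable union of sets closed in `S`. -/
def FsigmaIn {X : Type*} [TopologicalSpace X] (T S : Set X) : Prop :=
  T ⊆ S ∧ ∃ f : ℕ → Set X, (∀ n, ∃ c : Set X, IsClosed c ∧ f n = c ∩ S) ∧ T = ⋃ n, f n

/-- `X` is a strong Cantor manifold with respect to the class `C`. -/
def StrongCantorManifold (X : Type*) [TopologicalSpace X] (C : Set X → Prop) : Prop :=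
  ¬ ∃ F : ℕ → Set X, (∀ i, IsClosed (F i) ∧ F i ≠ Set.univ) ∧ (⋃ i, F i) = Set.univ ∧
    C (⋃ i, ⋃ j, ⋃ (_ : i ≠ j), F i ∩ F j)

section MzkAux
open Set
variable {Z : Type*} [TopologicalSpace Z]

variable {Z : Type*} [TopologicalSpace Z]

/-- In a compact T2 space, if the connected component of `x` is disjoint from a closed set `B`,
then some clopen set containing `x` is disjoint from `B`. -/
lemma mzk_clopen_sep [CompactSpace Z] [T2Space Z] (x : Z) {B : Set Z} (hB : IsClosed B)
    (h : connectedComponent x ∩ B = ∅) :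
    ∃ V : Set Z, IsClopen V ∧ x ∈ V ∧ V ∩ B = ∅ := by
  have hcomp := hB.isCompact
  have hBi : B ∩ ⋂ s : { s : Set Z // IsClopen s ∧ x ∈ s }, (s : Set Z) = ∅ := by
    rw [← connectedComponent_eq_iInter_isClopen x, inter_comm]; exact h
  obtain ⟨t, ht⟩ := hcomp.elim_finite_subfamily_closed
    (fun s : { s : Set Z // IsClopen s ∧ x ∈ s } => (s : Set Z)) (fun s => s.2.1.1) hBi
  refine ⟨⋂ s ∈ t, (s : Set Z), isClopen_biInter_finset fun s _ => s.2.1, ?_, ?_⟩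
  · exact mem_iInter₂.2 fun s _ => s.2.2
  · rw [inter_comm]; exact ht

/-- Wire lemma: in a connected compact T2 space, given a closed set `F` containing its
"boundary" inside a closed set `B ⊆ F`, with `Fᶜ` nonempty, every point of `F` is joined
to `B` by a continuum inside `F`. -/
lemma mzk_wire [CompactSpace Z] [T2Space Z] [ConnectedSpace Z] {F B : Set Z}
    (hF : IsClosed F) (hB : IsClosed B) (hBF : B ⊆ F)
    (hfr : ∀ z ∈ F, z ∉ interior F → z ∈ B) (hne : Fᶜ.Nonempty) {x : Z} (hx : x ∈ F) :
    ∃ T ⊆ F, IsCompact T ∧ IsConnected T ∧ x ∈ T ∧ (T ∩ B).Nonempty := by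
  haveI : CompactSpace F := isCompact_iff_compactSpace.mp hF.isCompact
  set x' : F := ⟨x, hx⟩
  set T : Set Z := (↑) '' connectedComponent x' with hT
  have hTsub : T ⊆ F := by rintro z ⟨w, _, rfl⟩; exact w.2
  have hTc : IsCompact T :=
    (isClosed_connectedComponent.isCompact).image continuous_subtype_val
  have hTconn : IsConnected T :=
    isConnected_connectedComponent.image _ continuous_subtype_val.continuousOn
  have hxT : x ∈ T := ⟨x', mem_connectedComponent, rfl⟩
  refine ⟨T, hTsub, hTc, hTconn, hxT, ?_⟩
  by_contra hemp
  rw [not_nonempty_iff_eq_empty] at hemp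
  -- transfer to the subtype
  have h2 : connectedComponent x' ∩ ((↑) ⁻¹' B : Set F) = ∅ := by
    ext w; simp only [mem_inter_iff, mem_preimage, mem_empty_iff_false, iff_false, not_and]
    intro hw hwB
    exact absurd (⟨(w : Z), ⟨w, hw, rfl⟩, hwB⟩ : (T ∩ B).Nonempty) (by rw [hemp]; exact not_nonempty_empty)
  obtain ⟨V, hV, hxV, hVB⟩ := mzk_clopen_sep x' (hB.preimage continuous_subtype_val) h2
  set W : Set Z := (↑) '' V with hW
  have hWF : W ⊆ F := by rintro z ⟨w, _, rfl⟩; exact w.2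
  have hWB : W ∩ B = ∅ := by
    ext z; simp only [mem_inter_iff, mem_empty_iff_false, iff_false, not_and]
    rintro ⟨w, hwV, rfl⟩ hzB
    have : w ∈ V ∩ ((↑) ⁻¹' B : Set F) := ⟨hwV, hzB⟩
    rw [hVB] at this; exact this
  have hWint : W ⊆ interior F := by
    intro z hz
    by_contra hzi
    have : z ∈ W ∩ B := ⟨hz, hfr z (hWF hz) hzi⟩
    rw [hWB] at this; exact this
  have hWclosed : IsClosed W :=
    (hV.1.isCompact.image continuous_subtype_val).isClosed
  have hWopen : IsOpen W := by
    obtain ⟨O, hO, hVO⟩ := isOpen_induced_iff.mp hV.2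
    have : W = O ∩ interior F := by
      apply Subset.antisymm
      · rintro z ⟨w, hwV, rfl⟩
        exact ⟨by rw [← hVO] at hwV; exact hwV, hWint ⟨w, hwV, rfl⟩⟩
      · rintro z ⟨hzO, hzF⟩
        exact ⟨⟨z, interior_subset hzF⟩, by rw [← hVO]; exact hzO, rfl⟩
    rw [this]; exact hO.inter isOpen_interior
  rcases isClopen_iff.mp ⟨hWclosed, hWopen⟩ with h0 | h1
  · exact absurd h0 (Nonempty.ne_empty ⟨x, ⟨x', hxV, rfl⟩⟩)
  · obtain ⟨u, hu⟩ := hne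
    exact hu (hWF (h1 ▸ mem_univ u))

/-- The mzk_core step of Sierpiński's theorem, inside a continuum `Z`. -/
lemma mzk_core [CompactSpace Z] [T2Space Z] [ConnectedSpace Z] (D : ℕ → Set Z)
    (hcl : ∀ n, IsClosed (D n)) (hdisj : ∀ m n, m ≠ n → D m ∩ D n = ∅)
    (hcov : (⋃ n, D n) = univ)
    {i j : ℕ} (hij : i ≠ j) (hi : (D i).Nonempty) (hj : (D j).Nonempty) (n : ℕ) :
    ∃ T : Set Z, IsCompact T ∧ IsConnected T ∧ T ∩ D n = ∅ ∧
      ∃ a b, a ≠ b ∧ (T ∩ D a).Nonempty ∧ (T ∩ D b).Nonempty := by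
  rcases eq_empty_or_nonempty (D n) with hDn | hDn
  · refine ⟨univ, isCompact_univ, isConnected_univ, by simp [hDn], i, j, hij, ?_, ?_⟩
    · simpa using hi
    · simpa using hj
  · -- choose j' ≠ n with D j' nonempty
    obtain ⟨j', hj'n, hj'⟩ : ∃ j', j' ≠ n ∧ (D j').Nonempty := by
      rcases eq_or_ne i n with rfl | hin
      · exact ⟨j, fun h => hij h.symm, hj⟩
      · exact ⟨i, hin, hi⟩
    obtain ⟨U, V, hU, hV, hnU, hj'V, hUV⟩ :=
      normal_separation (hcl n) (hcl j')
        (disjoint_iff_inter_eq_empty.mpr (hdisj n j' (Ne.symm hj'n)))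
    obtain ⟨x, hx⟩ := hj'
    have hxU : x ∉ U := fun h => hUV.ne_of_mem h (hj'V hx) rfl
    have hclU : closure U ∩ D j' = ∅ := by
      have h1 : closure U ⊆ Vᶜ :=
        closure_minimal (fun z hz hzV => hUV.ne_of_mem hz hzV rfl) hV.isClosed_compl
      ext z; simp only [mem_inter_iff, mem_empty_iff_false, iff_false, not_and]
      exact fun hz hzj => h1 hz (hj'V hzj)
    -- apply the mzk_wire lemma with F = Uᶜ, B = closure U ∩ Uᶜ
    obtain ⟨T, hTsub, hTc, hTconn, hxT, y, hyT, hyB⟩ :=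
      mzk_wire (F := Uᶜ) (B := closure U ∩ Uᶜ) hU.isClosed_compl
        (isClosed_closure.inter hU.isClosed_compl) inter_subset_right
        (fun z hz hzi => ⟨by rwa [interior_compl, mem_compl_iff, not_not] at hzi, hz⟩)
        (by rw [compl_compl]; exact hDn.mono hnU) hxU
    obtain ⟨b, hyb⟩ : ∃ b, y ∈ D b := by
      have : y ∈ ⋃ m, D m := hcov ▸ mem_univ y
      exact mem_iUnion.mp this
    have hbj' : j' ≠ b := by
      rintro rfl
      have : y ∈ closure U ∩ D j' := ⟨hyB.1, hyb⟩
      rw [hclU] at this; exact this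
    refine ⟨T, hTc, hTconn, ?_, j', b, hbj', ⟨x, hxT, hx⟩, ⟨y, hyT, hyb⟩⟩
    ext z; simp only [mem_inter_iff, mem_empty_iff_false, iff_false, not_and]
    exact fun hzT hzn => hTsub hzT (hnU hzn)

/-- Step lemma at the level of sets. -/
lemma mzk_stepY {Y : Type*} [TopologicalSpace Y] [CompactSpace Y] [T2Space Y]
    (Cs : ℕ → Set Y) (hcl : ∀ n, IsClosed (Cs n))
    (hdisj : ∀ m n, m ≠ n → Cs m ∩ Cs n = ∅) (hcov : (⋃ n, Cs n) = univ)
    {S : Set Y} (hSc : IsCompact S) (hSconn : IsConnected S)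
    {i j : ℕ} (hij : i ≠ j) (hi : (S ∩ Cs i).Nonempty) (hj : (S ∩ Cs j).Nonempty) (n : ℕ) :
    ∃ S' ⊆ S, IsCompact S' ∧ IsConnected S' ∧ S' ∩ Cs n = ∅ ∧
      ∃ a b, a ≠ b ∧ (S' ∩ Cs a).Nonempty ∧ (S' ∩ Cs b).Nonempty := by
  haveI : CompactSpace S := isCompact_iff_compactSpace.mp hSc
  haveI : ConnectedSpace S := Subtype.connectedSpace hSconn
  set D : ℕ → Set S := fun m => (↑) ⁻¹' Cs m with hD
  have hmem : ∀ m (z : Y), z ∈ S → (z ∈ Cs m ↔ (∃ w : S, w ∈ D m ∧ (w : Y) = z)) := by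
    intro m z hz
    constructor
    · intro h; exact ⟨⟨z, hz⟩, h, rfl⟩
    · rintro ⟨w, hw, rfl⟩; exact hw
  have hne : ∀ m, (S ∩ Cs m).Nonempty → (D m).Nonempty := by
    rintro m ⟨z, hzS, hzm⟩; exact ⟨⟨z, hzS⟩, hzm⟩
  obtain ⟨T, hTc, hTconn, hTn, a, b, hab, hTa, hTb⟩ :=
    mzk_core D (fun m => (hcl m).preimage continuous_subtype_val)
      (fun m k hmk => by
        ext w; simp only [mem_inter_iff, mem_empty_iff_false, iff_false, not_and, hD, mem_preimage]
        intro h1 h2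
        have : (w : Y) ∈ Cs m ∩ Cs k := ⟨h1, h2⟩
        rw [hdisj m k hmk] at this; exact this)
      (by ext w; simp only [mem_iUnion, mem_univ, iff_true, hD, mem_preimage]
          have : (w : Y) ∈ ⋃ m, Cs m := hcov ▸ mem_univ _
          exact mem_iUnion.mp this)
      hij (hne i hi) (hne j hj) n
  refine ⟨(↑) '' T, by rintro z ⟨w, _, rfl⟩; exact w.2,
    hTc.image continuous_subtype_val, hTconn.image _ continuous_subtype_val.continuousOn, ?_, a, b, hab, ?_, ?_⟩
  · ext z; simp only [mem_inter_iff, mem_empty_iff_false, iff_false, not_and]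
    rintro ⟨w, hwT, rfl⟩ hzn
    have : w ∈ T ∩ D n := ⟨hwT, hzn⟩
    rw [hTn] at this; exact this
  · obtain ⟨w, hwT, hwa⟩ := hTa; exact ⟨w, ⟨w, hwT, rfl⟩, hwa⟩
  · obtain ⟨w, hwT, hwb⟩ := hTb; exact ⟨w, ⟨w, hwT, rfl⟩, hwb⟩

/-- Sierpiński's theorem: a continuum is not the union of countably many pairwise disjoint
closed sets, at least two of which are nonempty. -/
theorem mzk_sierpinski {Y : Type*} [TopologicalSpace Y] [CompactSpace Y] [T2Space Y]
    [ConnectedSpace Y] (Cs : ℕ → Set Y) (hcl : ∀ n, IsClosed (Cs n))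
    (hdisj : ∀ m n, m ≠ n → Cs m ∩ Cs n = ∅) (hcov : (⋃ n, Cs n) = univ)
    {i j : ℕ} (hij : i ≠ j) (hi : (Cs i).Nonempty) (hj : (Cs j).Nonempty) : False := by
  set Good : Set Y → Prop := fun S => (IsCompact S ∧ IsConnected S) ∧
      ∃ a b, a ≠ b ∧ (S ∩ Cs a).Nonempty ∧ (S ∩ Cs b).Nonempty with hGood
  have step : ∀ S, Good S → ∀ n, ∃ S', (S' ⊆ S ∧ S' ∩ Cs n = ∅) ∧ Good S' := by
    rintro S ⟨⟨hSc, hSconn⟩, a, b, hab, ha, hb⟩ n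
    obtain ⟨S', hsub, h1, h2, h3, a', b', hab', ha', hb'⟩ :=
      mzk_stepY Cs hcl hdisj hcov hSc hSconn hab ha hb n
    exact ⟨S', ⟨hsub, h3⟩, ⟨h1, h2⟩, a', b', hab', ha', hb'⟩
  have good_univ : Good univ := by
    refine ⟨⟨isCompact_univ, isConnected_univ⟩, i, j, hij, by simpa using hi, by simpa using hj⟩
  let seq : ℕ → {S : Set Y // Good S} := fun n =>
    Nat.rec ⟨univ, good_univ⟩
      (fun m p => ⟨(step p.1 p.2 m).choose, (step p.1 p.2 m).choose_spec.2⟩) n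
  have hseq : ∀ m, ((seq (m + 1)).1 ⊆ (seq m).1 ∧ (seq (m + 1)).1 ∩ Cs m = ∅) :=
    fun m => (step (seq m).1 (seq m).2 m).choose_spec.1
  have hne : ∀ m, ((seq m).1).Nonempty := by
    intro m
    obtain ⟨_, a, b, _, ⟨z, hz, _⟩, _⟩ := (seq m).2
    exact ⟨z, hz⟩
  have hcomp : ∀ m, IsCompact ((seq m).1) := fun m => (seq m).2.1.1
  have hinter : (⋂ m, (seq m).1).Nonempty :=
    IsCompact.nonempty_iInter_of_sequence_nonempty_isCompact_isClosed _
      (fun m => (hseq m).1) hne (hcomp 0) (fun m => (hcomp m).isClosed)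
  obtain ⟨z, hz⟩ := hinter
  have hz' : z ∈ ⋃ m, Cs m := hcov ▸ mem_univ z
  obtain ⟨m, hm⟩ := mem_iUnion.mp hz'
  have : z ∈ (seq (m + 1)).1 ∩ Cs m := ⟨mem_iInter.mp hz (m + 1), hm⟩
  rw [(hseq m).2] at this; exact this


end MzkAux

open Set in
/-- Proposition 2.1: every compact Hausdorff Mazurkiewicz manifold with respect to an admissible
class `C` is a strong Cantor manifold with respect to `C`. -/
theorem mazurkiewicz_implies_strongCantor {X : Type*} [TopologicalSpace X] [CompactSpace X]
    [T2Space X] (C : Set X → Prop)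
    (hChomeo : ∀ S T : Set X, C S → Nonempty (S ≃ₜ T) → C T)
    (hCFsig : ∀ S T : Set X, C S → FsigmaIn T S → C T)
    (hMaz : ∀ X0 X1 : Set X, IsClosed X0 → IsClosed X1 → Disjoint X0 X1 →
      (interior X0).Nonempty → (interior X1).Nonempty →
      ∀ F : Set X, FsigmaIn F Set.univ → C F →
        ∃ K : Set X, K ⊆ Set.univ \ F ∧ IsCompact K ∧ IsConnected K ∧
          (K ∩ X0).Nonempty ∧ (K ∩ X1).Nonempty) :
    StrongCantorManifold X C := by
  rintro ⟨F, hF, hcover, hC⟩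
  set Fint : Set X := ⋃ i, ⋃ j, ⋃ (_ : i ≠ j), F i ∩ F j with hFintdef
  have hsubint : ∀ i j, i ≠ j → F i ∩ F j ⊆ Fint := by
    intro i j hij z hz
    exact mem_iUnion.mpr ⟨i, mem_iUnion.mpr ⟨j, mem_iUnion.mpr ⟨hij, hz⟩⟩⟩
  -- X is nonempty
  haveI : Nonempty X := by
    rcases isEmpty_or_nonempty X with h | h
    · exact absurd (Subsingleton.elim (F 0) univ) (hF 0).2
    · exact h
  -- Fint is Fσ
  have hFsig : FsigmaIn Fint Set.univ := by
    refine ⟨subset_univ _,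
      fun n => if n.unpair.1 ≠ n.unpair.2 then F n.unpair.1 ∩ F n.unpair.2 else ∅, fun n => ?_, ?_⟩
    · dsimp only
      split_ifs with h
      · exact ⟨F n.unpair.1 ∩ F n.unpair.2, (hF _).1.inter (hF _).1, (inter_univ _).symm⟩
      · exact ⟨∅, isClosed_empty, (inter_univ _).symm⟩
    · ext z
      simp only [hFintdef, mem_iUnion]
      constructor
      · rintro ⟨i, j, hij, hz⟩
        refine ⟨Nat.pair i j, ?_⟩
        simp only [Nat.unpair_pair]
        rw [if_pos hij]; exact hz
      · rintro ⟨n, hn⟩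
        split_ifs at hn with h
        · exact ⟨n.unpair.1, n.unpair.2, h, hn⟩
        · exact absurd hn (notMem_empty z)
  -- Baire: some F i0 has nonempty interior
  obtain ⟨i0, x0, hx0⟩ := nonempty_interior_of_iUnion_of_closed (fun i => (hF i).1) hcover
  -- the complement of F i0 is open and nonempty
  obtain ⟨u, hu⟩ := (ne_univ_iff_exists_notMem _).mp (hF i0).2
  have hdense := dense_iUnion_interior_of_closed (fun i => (hF i).1) hcover
  obtain ⟨y, hy2, hy1⟩ := hdense.inter_open_nonempty ((F i0)ᶜ)
    (isOpen_compl_iff.mpr (hF i0).1) ⟨u, hu⟩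
  obtain ⟨j, hyj⟩ := mem_iUnion.mp hy1
  have hji0 : j ≠ i0 := fun h => hy2 (h ▸ interior_subset hyj)
  -- closed neighborhoods
  obtain ⟨K0, hK0c, hK0x, hK0sub⟩ := exists_compact_subset isOpen_interior hx0
  obtain ⟨K1, hK1c, hK1x, hK1sub⟩ := exists_compact_subset
    (isOpen_interior.inter (isOpen_compl_iff.mpr (hF i0).1)) ⟨hyj, hy2⟩
  have hK0F : K0 ⊆ F i0 := hK0sub.trans interior_subset
  have hK1F : K1 ⊆ F j := hK1sub.trans (inter_subset_left.trans interior_subset)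
  have hdisj01 : Disjoint K0 K1 := by
    rw [disjoint_left]
    intro z hz0 hz1
    exact (hK1sub hz1).2 (hK0F hz0)
  obtain ⟨K, hKF, hKc, hKconn, hK0, hK1⟩ :=
    hMaz K0 K1 hK0c.isClosed hK1c.isClosed hdisj01 ⟨x0, hK0x⟩ ⟨y, hK1x⟩ Fint hFsig hC
  -- Sierpiński inside K
  haveI : CompactSpace K := isCompact_iff_compactSpace.mp hKc
  haveI : ConnectedSpace K := Subtype.connectedSpace hKconn
  refine mzk_sierpinski (Y := K) (fun n => (↑) ⁻¹' F n)
    (fun n => (hF n).1.preimage continuous_subtype_val) ?_ ?_ hji0.symm ?_ ?_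
  · intro m n hmn
    ext w
    simp only [mem_inter_iff, mem_preimage, mem_empty_iff_false, iff_false, not_and]
    intro h1 h2
    exact (hKF w.2).2 (hsubint m n hmn ⟨h1, h2⟩)
  · ext w
    simp only [mem_iUnion, mem_preimage, mem_univ, iff_true]
    exact mem_iUnion.mp (hcover ▸ mem_univ (w : X))
  · obtain ⟨z, hzK, hz0⟩ := hK0
    exact ⟨⟨z, hzK⟩, hK0F hz0⟩
  · obtain ⟨z, hzK, hz1⟩ := hK1
    exact ⟨⟨z, hzK⟩, hK1F hz1⟩
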